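/- Let (V,G) be a faithful representation satisfying the identity x∘(g_1−1)⋯(g_n−1)≡0 for all g_i in G (that is, (V,G) is faithfully n-unitriangular). Then G is a nilpotent group of nilpotency class at most n−1. -/

import Mathlib

namespace KaloujnineAux

variable {K V G : Type*} [Field K] [AddCommGroup V] [Module K V] [Group G]
  (ρ : Representation K G V)

/-- Filtration: span of images of length-`i` products of `ρ g - 1`. -/
def W (i : ℕ) : Submodule K V :=
  Submodule.span K {x | ∃ (l : List G) (v : V), l.length = i ∧
    ((l.map (fun g => (ρ g - 1 : Module.End K V))).prod) v = x}

lemma mem_W_of (l : List G) (v : V) :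
    ((l.map (fun g => (ρ g - 1 : Module.End K V))).prod) v ∈ W ρ l.length :=
  Submodule.subset_span ⟨l, v, rfl, rfl⟩

lemma W_zero_top : W ρ 0 = ⊤ := by
  rw [eq_top_iff]
  intro v _
  have := mem_W_of ρ [] v
  simpa using this

lemma step (g : G) {i : ℕ} {v : V} (hv : v ∈ W ρ i) :
    (ρ g - 1 : Module.End K V) v ∈ W ρ (i + 1) := by
  induction hv using Submodule.span_induction with
  | mem x hx =>
    obtain ⟨l, w, hl, rfl⟩ := hx
    have := mem_W_of ρ (g :: l) w
    simpa [List.prod_cons, Module.End.mul_apply, hl] using this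
  | zero => simp
  | add x y _ _ hx hy => simpa [map_add] using add_mem hx hy
  | smul a x _ hx => simpa [map_smul] using Submodule.smul_mem _ a hx

lemma W_antitone {i : ℕ} {v : V} (hv : v ∈ W ρ (i + 1)) : v ∈ W ρ i := by
  induction hv using Submodule.span_induction with
  | mem x hx =>
    obtain ⟨l, w, hl, rfl⟩ := hx
    rcases List.eq_nil_or_concat l with rfl | ⟨L, b, rfl⟩
    · simp at hl
    · have hL : L.length = i := by simpa [List.concat_eq_append] using hl
      have := mem_W_of ρ L ((ρ b - 1 : Module.End K V) w)
      rw [hL] at this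
      simpa [List.concat_eq_append, List.prod_append, Module.End.mul_apply] using this
  | zero => simp
  | add x y _ _ hx hy => exact add_mem hx hy
  | smul a x _ hx => exact Submodule.smul_mem _ a hx

lemma rho_preserves (g : G) {i : ℕ} {v : V} (hv : v ∈ W ρ i) : ρ g v ∈ W ρ i := by
  have : ρ g v = v + (ρ g - 1 : Module.End K V) v := by
    simp [LinearMap.sub_apply]
  rw [this]
  exact add_mem hv (W_antitone ρ (step ρ g hv))

lemma central (k : ℕ) :
    ∀ g ∈ (⊤ : Subgroup G).lowerCentralSeries k, ∀ i, ∀ v ∈ W ρ i,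
      (ρ g - 1 : Module.End K V) v ∈ W ρ (i + k + 1) := by
  induction k with
  | zero => intro g _ i v hv; simpa using step ρ g hv
  | succ k ih =>
    intro g hg
    rw [Subgroup.lowerCentralSeries_succ] at hg
    induction hg using Subgroup.closure_induction with
    | mem x hx =>
      obtain ⟨p, hp, q, -, rfl⟩ := hx
      intro i v hv
      -- ρ (p*q*p⁻¹*q⁻¹) - 1 applied to v
      set w : V := ρ p⁻¹ (ρ q⁻¹ v) with hw
      have hwW : w ∈ W ρ i := rho_preserves ρ _ (rho_preserves ρ _ hv)
      have key : (ρ (p*q*p⁻¹*q⁻¹) - 1 : Module.End K V) v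
          = (ρ p - 1 : Module.End K V) ((ρ q - 1 : Module.End K V) w)
            - (ρ q - 1 : Module.End K V) ((ρ p - 1 : Module.End K V) w) := by
        have h1 : ρ p (ρ q w) = ρ (p*q*p⁻¹*q⁻¹) v := by
          simp [hw, map_mul, Module.End.mul_apply]
        have h2 : ρ q (ρ p w) = v := by
          simp [hw, map_mul, ← Module.End.mul_apply, ← map_mul]
        simp only [LinearMap.sub_apply, Module.End.one_apply, map_sub, h1, h2]
        abel
      rw [commutatorElement_def, key]
      refine sub_mem ?_ ?_
      · have h1 : (ρ q - 1 : Module.End K V) w ∈ W ρ (i + 1) := step ρ q hwW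
        have h2 := ih p hp (i + 1) _ h1
        have : i + 1 + k + 1 = i + (k + 1) + 1 := by ring
        rwa [this] at h2
      · have h1 := ih p hp i w hwW
        have h2 := step ρ q h1
        have : i + k + 1 + 1 = i + (k + 1) + 1 := by ring
        rwa [this] at h2
    | one => intro i v hv; simp
    | mul x y hx hy ihx ihy =>
      intro i v hv
      have key : (ρ (x*y) - 1 : Module.End K V) v
          = ρ x ((ρ y - 1 : Module.End K V) v) + (ρ x - 1 : Module.End K V) v := by
        simp [LinearMap.sub_apply, map_mul, Module.End.mul_apply]
      rw [key]
      exact add_mem (rho_preserves ρ x (ihy i v hv)) (ihx i v hv)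
    | inv x hx ihx =>
      intro i v hv
      have hwW : ρ x⁻¹ v ∈ W ρ i := rho_preserves ρ _ hv
      have key : (ρ x⁻¹ - 1 : Module.End K V) v
          = -((ρ x - 1 : Module.End K V) (ρ x⁻¹ v)) := by
        simp [LinearMap.sub_apply, ← Module.End.mul_apply, ← map_mul]
      rw [key]
      exact neg_mem (ihx i _ hwW)

end KaloujnineAux

open KaloujnineAux in
/-- Kaloujnine's theorem: a faithful `n`-unitriangular representation forces the
group to be nilpotent of class at most `n - 1`. -/
theorem kaloujnine {K V G : Type*} [Field K] [AddCommGroup V] [Module K V] [Group G]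
    (ρ : Representation K G V) (hfaithful : Function.Injective ρ) (n : ℕ)
    (h : ∀ l : List G, l.length = n →
      ∀ v : V, ((l.map (fun g => (ρ g - 1 : Module.End K V))).prod) v = 0) :
    (⊤ : Subgroup G).lowerCentralSeries (n - 1) = ⊥ := by
  have hWn : W ρ n = ⊥ := by
    rw [eq_bot_iff, W]
    refine Submodule.span_le.2 ?_
    rintro x ⟨l, v, hl, rfl⟩
    simp [h l hl v]
  rcases Nat.eq_zero_or_pos n with rfl | hn
  · -- V is trivial, so G is trivial
    have hV : ∀ v : V, v = 0 := by
      intro v; simpa using h [] rfl v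
    rw [eq_bot_iff]
    intro g _
    have : ρ g = ρ 1 := by
      ext v; rw [hV v]; simp
    simpa using hfaithful this
  · rw [eq_bot_iff]
    intro g hg
    have : ρ g = ρ 1 := by
      ext v
      have hv : v ∈ W ρ 0 := by rw [W_zero_top]; trivial
      have := central ρ (n - 1) g hg 0 v hv
      rw [show 0 + (n - 1) + 1 = n by omega, hWn] at this
      have h0 : (ρ g - 1 : Module.End K V) v = 0 := this
      have : ρ g v = v := by
        have := sub_eq_zero.mp (by simpa [LinearMap.sub_apply] using h0)
        simpa using this
      simpa using this
    simpa using hfaithful this
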